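/- For every n ≥ 0 and all i, j ≥ 0, the counts s_{m,i,j} = #{π ∈ S_m : cpk^o(π) = i, cpk^e(π) = j} satisfy the Schett–Dumont recurrence s_{2n+1,i,j} = (2i+1)·s_{2n,i,j} + (2j+2)·s_{2n,i−1,j+1} + (2n−2i−2j+2)·s_{2n,i−1,j}, where any term with a negative index is interpreted as 0. -/
import Mathlib


open Finset

/-- Number of odd cycle peaks of a permutation of `[n]` (the element `i : Fin n`
represents the value `i+1 ∈ {1,…,n}`). -/
def cpko (n : ℕ) (π : Equiv.Perm (Fin n)) : ℕ :=
  (Finset.univ.filter fun i : Fin n => π.symm i < i ∧ π i < i ∧ Odd ((i : ℕ) + 1)).card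

/-- Number of even cycle peaks of a permutation of `[n]`. -/
def cpke (n : ℕ) (π : Equiv.Perm (Fin n)) : ℕ :=
  (Finset.univ.filter fun i : Fin n => π.symm i < i ∧ π i < i ∧ Even ((i : ℕ) + 1)).card

/-- `s m i j = #{π ∈ S_m : cpk^o(π) = i, cpk^e(π) = j}`. -/
def s (m i j : ℕ) : ℕ :=
  (Finset.univ.filter fun π : Equiv.Perm (Fin m) => cpko m π = i ∧ cpke m π = j).card

namespace SD
variable {m : ℕ}

def ext (σ : Equiv.Perm (Fin m)) : Equiv.Perm (Fin (m+1)) where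
  toFun x := if h : (x : ℕ) < m then Fin.castSucc (σ ⟨x, h⟩) else x
  invFun x := if h : (x : ℕ) < m then Fin.castSucc (σ.symm ⟨x, h⟩) else x
  left_inv x := by
    by_cases h : (x : ℕ) < m
    · simp only [h, dif_pos]
      have h2 : ((Fin.castSucc (σ ⟨x, h⟩) : Fin (m+1)) : ℕ) < m := (σ ⟨x, h⟩).isLt
      rw [dif_pos h2]
      ext
      simp
    · simp [h]
  right_inv x := by
    by_cases h : (x : ℕ) < m
    · simp only [h, dif_pos]
      have h2 : ((Fin.castSucc (σ.symm ⟨x, h⟩) : Fin (m+1)) : ℕ) < m := (σ.symm ⟨x, h⟩).isLt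
      rw [dif_pos h2]
      ext
      simp
    · simp [h]

@[simp] lemma ext_castSucc (σ : Equiv.Perm (Fin m)) (z : Fin m) :
    ext σ z.castSucc = (σ z).castSucc := by
  show (if h : ((z.castSucc : Fin (m+1)) : ℕ) < m then _ else _) = _
  rw [dif_pos (by simpa using z.isLt)]
  have hz : (⟨((z.castSucc : Fin (m+1)) : ℕ), by simpa using z.isLt⟩ : Fin m) = z := by
    ext; simp
  rw [hz]

@[simp] lemma ext_last (σ : Equiv.Perm (Fin m)) : ext σ (Fin.last m) = Fin.last m := by
  show (if h : ((Fin.last m : Fin (m+1)) : ℕ) < m then _ else _) = _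
  rw [dif_neg (by simp)]

lemma ext_symm (σ : Equiv.Perm (Fin m)) : (ext σ).symm = ext σ.symm := rfl

def Φ (σ : Equiv.Perm (Fin m)) (x : Fin (m+1)) : Equiv.Perm (Fin (m+1)) :=
  (Equiv.swap x (Fin.last m)).trans (ext σ)

lemma Φ_symm_last (σ : Equiv.Perm (Fin m)) (x : Fin (m+1)) :
    (Φ σ x).symm (Fin.last m) = x := by
  simp [Φ, Equiv.symm_trans_apply, ext_symm, Equiv.swap_apply_right]

lemma Φ_injective : Function.Injective (fun p : Equiv.Perm (Fin m) × Fin (m+1) => Φ p.1 p.2) := by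
  rintro ⟨σ, x⟩ ⟨τ, y⟩ h
  simp only at h
  have hx : x = y := by rw [← Φ_symm_last σ x, h, Φ_symm_last]
  subst hx
  have hext : ext σ = ext τ := by
    apply Equiv.ext
    intro w
    have h1 : Φ σ x (Equiv.swap x (Fin.last m) w) = Φ τ x (Equiv.swap x (Fin.last m) w) := by
      rw [h]
    simpa [Φ, Equiv.trans_apply, Equiv.swap_apply_self] using h1
  have hst : σ = τ := by
    apply Equiv.ext
    intro z
    have := congrArg (fun e : Equiv.Perm (Fin (m+1)) => e z.castSucc) hext
    simpa [Fin.castSucc_inj] using this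
  rw [hst]

lemma Φ_bijective :
    Function.Bijective (fun p : Equiv.Perm (Fin m) × Fin (m+1) => Φ p.1 p.2) := by
  rw [Fintype.bijective_iff_injective_and_card]
  refine ⟨Φ_injective, ?_⟩
  simp [Fintype.card_perm, Nat.factorial_succ, mul_comm]

end SD

namespace SD
variable {m : ℕ}

lemma Φ_last (σ : Equiv.Perm (Fin m)) : Φ σ (Fin.last m) = ext σ := by
  simp only [Φ, Equiv.swap_self]
  rfl

lemma Φ_castSucc_apply (σ : Equiv.Perm (Fin m)) (y z : Fin m) :
    Φ σ y.castSucc z.castSucc = if z = y then Fin.last m else (σ z).castSucc := by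
  simp only [Φ, Equiv.trans_apply]
  by_cases h : z = y
  · subst h
    rw [Equiv.swap_apply_left, ext_last, if_pos rfl]
  · rw [Equiv.swap_apply_of_ne_of_ne (by simpa [Fin.castSucc_inj] using h)
      (Fin.castSucc_lt_last z).ne, ext_castSucc, if_neg h]

lemma Φ_apply_last (σ : Equiv.Perm (Fin m)) (y : Fin m) :
    Φ σ y.castSucc (Fin.last m) = (σ y).castSucc := by
  simp [Φ, Equiv.trans_apply, Equiv.swap_apply_right]

lemma Φ_symm_castSucc (σ : Equiv.Perm (Fin m)) (y z : Fin m) :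
    (Φ σ y.castSucc).symm z.castSucc = if z = σ y then Fin.last m else (σ.symm z).castSucc := by
  have : (Φ σ y.castSucc).symm z.castSucc
      = Equiv.swap y.castSucc (Fin.last m) ((σ.symm z).castSucc) := by
    simp [Φ, Equiv.symm_trans_apply, ext_symm, Equiv.symm_swap]
  rw [this]
  by_cases h : z = σ y
  · have hy : σ.symm z = y := by rw [h, Equiv.symm_apply_apply]
    rw [hy, Equiv.swap_apply_left, if_pos h]
  · have hy : σ.symm z ≠ y := fun hc => h (by rw [← hc]; simp)
    rw [Equiv.swap_apply_of_ne_of_ne (by simpa [Fin.castSucc_inj] using hy)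
      (Fin.castSucc_lt_last _).ne, if_neg h]

lemma card_filter_perm_comp {α : Type*} [Fintype α] [DecidableEq α] (σ : Equiv.Perm α)
    (P : α → Prop) [DecidablePred P] :
    (univ.filter fun y => P (σ y)).card = (univ.filter P).card := by
  apply Finset.card_bij (fun y _ => σ y)
  · intro y hy
    simp only [mem_filter, mem_univ, true_and] at hy ⊢
    exact hy
  · intro y _ z _ h
    exact σ.injective h
  · intro z hz
    simp only [mem_filter, mem_univ, true_and] at hz
    exact ⟨σ.symm z, by simp [hz], by simp⟩

lemma card_filter_fin_succ (P : Fin (m+1) → Prop) [DecidablePred P] :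
    (univ.filter P).card
      = (univ.filter fun z : Fin m => P z.castSucc).card + (if P (Fin.last m) then 1 else 0) := by
  rw [Finset.card_filter, Finset.card_filter, Fin.sum_univ_castSucc]

end SD

namespace SD

lemma not_peak_peak {m : ℕ} (σ : Equiv.Perm (Fin m)) (z : Fin m)
    (h1 : σ z < z) (h2 : σ.symm (σ z) < σ z) : False := by
  rw [Equiv.symm_apply_apply] at h2
  exact absurd h1 (not_lt.2 h2.le)

lemma card_filter_aux {m : ℕ} (σ : Equiv.Perm (Fin m)) (y : Fin m) (Q : Fin m → Prop)
    [DecidablePred Q] (hQ : ∀ z, Q z → σ.symm z < z ∧ σ z < z) :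
    (univ.filter fun z => Q z ∧ z ≠ y ∧ z ≠ σ y).card
      + ((if Q y then 1 else 0) + (if Q (σ y) then 1 else 0))
      = (univ.filter Q).card := by
  by_cases hy : Q y
  · have hA := hQ y hy
    have hsy : ¬ Q (σ y) := fun hc => not_peak_peak σ y hA.2 (hQ _ hc).1
    rw [if_pos hy, if_neg hsy]
    have hset : (univ.filter fun z => Q z ∧ z ≠ y ∧ z ≠ σ y) = (univ.filter Q).erase y := by
      ext z
      simp only [mem_filter, mem_univ, true_and, mem_erase]
      constructor
      · rintro ⟨h1, h2, _⟩; exact ⟨h2, h1⟩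
      · rintro ⟨h1, h2⟩
        exact ⟨h2, h1, fun hc => hsy (hc ▸ h2)⟩
    rw [hset]
    have hmem : y ∈ univ.filter Q := by simp [hy]
    have := Finset.card_erase_add_one hmem
    omega
  · by_cases hsy : Q (σ y)
    · have hA := hQ _ hsy
      have hne : y ≠ σ y := by
        intro hc
        rw [← hc] at hsy
        exact hy hsy
      rw [if_neg hy, if_pos hsy]
      have hset : (univ.filter fun z => Q z ∧ z ≠ y ∧ z ≠ σ y) = (univ.filter Q).erase (σ y) := by
        ext z
        simp only [mem_filter, mem_univ, true_and, mem_erase]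
        constructor
        · rintro ⟨h1, _, h2⟩; exact ⟨h2, h1⟩
        · rintro ⟨h1, h2⟩
          exact ⟨h2, fun hc => hy (hc ▸ h2), h1⟩
      rw [hset]
      have hmem : σ y ∈ univ.filter Q := by simp [hsy]
      have := Finset.card_erase_add_one hmem
      omega
    · rw [if_neg hy, if_neg hsy]
      have hset : (univ.filter fun z => Q z ∧ z ≠ y ∧ z ≠ σ y) = univ.filter Q := by
        ext z
        simp only [mem_filter, mem_univ, true_and]
        constructor
        · rintro ⟨h1, _, _⟩; exact h1
        · intro h1
          exact ⟨h1, fun hc => hy (hc ▸ h1), fun hc => hsy (hc ▸ h1)⟩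
      rw [hset]
      omega

end SD

namespace SD

lemma filter_ext_card {m : ℕ} (σ : Equiv.Perm (Fin m)) (pr : ℕ → Prop) [DecidablePred pr] :
    (univ.filter fun w : Fin (m+1) =>
        (ext σ).symm w < w ∧ ext σ w < w ∧ pr ((w : ℕ) + 1)).card
    = (univ.filter fun z : Fin m => σ.symm z < z ∧ σ z < z ∧ pr ((z : ℕ) + 1)).card := by
  rw [card_filter_fin_succ]
  rw [if_neg (by
    rintro ⟨h1, -, -⟩
    rw [ext_symm, ext_last] at h1
    exact lt_irrefl _ h1), add_zero]
  congr 1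
  ext z
  simp only [mem_filter, mem_univ, true_and, ext_symm, ext_castSucc,
    Fin.castSucc_lt_castSucc_iff, Fin.coe_castSucc]

lemma filter_Φ_card {m : ℕ} (σ : Equiv.Perm (Fin m)) (y : Fin m) (pr : ℕ → Prop)
    [DecidablePred pr] :
    (univ.filter fun w : Fin (m+1) =>
        (Φ σ y.castSucc).symm w < w ∧ Φ σ y.castSucc w < w ∧ pr ((w : ℕ) + 1)).card
    = (univ.filter fun z : Fin m =>
        (σ.symm z < z ∧ σ z < z ∧ pr ((z : ℕ) + 1)) ∧ z ≠ y ∧ z ≠ σ y).card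
      + (if pr (m + 1) then 1 else 0) := by
  rw [card_filter_fin_succ]
  congr 1
  · congr 1
    ext z
    simp only [mem_filter, mem_univ, true_and, Φ_symm_castSucc, Φ_castSucc_apply]
    have hnl : ∀ w : Fin m, ¬ (Fin.last m < w.castSucc) := fun w => lt_asymm (Fin.castSucc_lt_last w)
    by_cases hzy : z = y <;> by_cases hzsy : z = σ y <;>
      simp [hzy, hzsy, hnl, Fin.castSucc_lt_castSucc_iff]
  · have hiff : ((Φ σ y.castSucc).symm (Fin.last m) < Fin.last m ∧
        Φ σ y.castSucc (Fin.last m) < Fin.last m ∧ pr ((Fin.last m : ℕ) + 1)) ↔ pr (m + 1) := by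
      simp [Φ_symm_last, Φ_apply_last, Fin.castSucc_lt_last]
    rw [if_congr hiff rfl rfl]

end SD

namespace SD

lemma cpko_Φ_last (n : ℕ) (σ : Equiv.Perm (Fin (2*n))) :
    cpko (2*n+1) (Φ σ (Fin.last (2*n))) = cpko (2*n) σ := by
  rw [cpko, cpko, Φ_last]
  exact filter_ext_card σ _

lemma cpke_Φ_last (n : ℕ) (σ : Equiv.Perm (Fin (2*n))) :
    cpke (2*n+1) (Φ σ (Fin.last (2*n))) = cpke (2*n) σ := by
  rw [cpke, cpke, Φ_last]
  exact filter_ext_card σ _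

lemma cpko_Φ_castSucc (n : ℕ) (σ : Equiv.Perm (Fin (2*n))) (y : Fin (2*n)) :
    cpko (2*n+1) (Φ σ y.castSucc)
      + ((if σ.symm y < y ∧ σ y < y ∧ Odd ((y : ℕ) + 1) then 1 else 0)
        + (if σ.symm (σ y) < σ y ∧ σ (σ y) < σ y ∧ Odd (((σ y : Fin (2*n)) : ℕ) + 1)
            then 1 else 0))
      = cpko (2*n) σ + 1 := by
  rw [cpko, filter_Φ_card, if_pos ⟨n, by ring⟩]
  have h := card_filter_aux σ y (fun z => σ.symm z < z ∧ σ z < z ∧ Odd ((z : ℕ) + 1))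
      (fun z hz => ⟨hz.1, hz.2.1⟩)
  beta_reduce at h
  rw [cpko]
  omega

lemma cpke_Φ_castSucc (n : ℕ) (σ : Equiv.Perm (Fin (2*n))) (y : Fin (2*n)) :
    cpke (2*n+1) (Φ σ y.castSucc)
      + ((if σ.symm y < y ∧ σ y < y ∧ Even ((y : ℕ) + 1) then 1 else 0)
        + (if σ.symm (σ y) < σ y ∧ σ (σ y) < σ y ∧ Even (((σ y : Fin (2*n)) : ℕ) + 1)
            then 1 else 0))
      = cpke (2*n) σ := by
  rw [cpke, filter_Φ_card, if_neg (by rintro ⟨k, hk⟩; omega), add_zero]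
  have h := card_filter_aux σ y (fun z => σ.symm z < z ∧ σ z < z ∧ Even ((z : ℕ) + 1))
      (fun z hz => ⟨hz.1, hz.2.1⟩)
  beta_reduce at h
  rw [cpke]
  omega

end SD

namespace SD

lemma pointwise (n i j : ℕ) (σ : Equiv.Perm (Fin (2*n))) (y : Fin (2*n)) :
    (if cpko (2*n+1) (Φ σ y.castSucc) = i ∧ cpke (2*n+1) (Φ σ y.castSucc) = j
      then 1 else 0)
    = (if (σ.symm y < y ∧ σ y < y ∧ Odd ((y : ℕ) + 1))
          ∨ (σ.symm (σ y) < σ y ∧ σ (σ y) < σ y ∧ Odd (((σ y : Fin (2*n)) : ℕ) + 1))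
        then (if cpko (2*n) σ = i ∧ cpke (2*n) σ = j then 1 else 0) else 0)
      + (if (σ.symm y < y ∧ σ y < y ∧ Even ((y : ℕ) + 1))
          ∨ (σ.symm (σ y) < σ y ∧ σ (σ y) < σ y ∧ Even (((σ y : Fin (2*n)) : ℕ) + 1))
        then (if cpko (2*n) σ + 1 = i ∧ cpke (2*n) σ = j + 1 then 1 else 0) else 0)
      + (if ¬(σ.symm y < y ∧ σ y < y) ∧ ¬(σ.symm (σ y) < σ y ∧ σ (σ y) < σ y)
        then (if cpko (2*n) σ + 1 = i ∧ cpke (2*n) σ = j then 1 else 0) else 0) := by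
  have E1 := cpko_Φ_castSucc n σ y
  have E2 := cpke_Φ_castSucc n σ y
  by_cases hA : σ.symm y < y ∧ σ y < y
  · by_cases hB : σ.symm (σ y) < σ y ∧ σ (σ y) < σ y
    · exact absurd hB.1 (by rw [Equiv.symm_apply_apply]; exact not_lt.2 hA.2.le)
    · have c3 : ¬(σ.symm (σ y) < σ y ∧ σ (σ y) < σ y ∧ Odd (((σ y : Fin (2*n)) : ℕ) + 1)) :=
        fun hc => hB ⟨hc.1, hc.2.1⟩
      have c4 : ¬(σ.symm (σ y) < σ y ∧ σ (σ y) < σ y ∧ Even (((σ y : Fin (2*n)) : ℕ) + 1)) :=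
        fun hc => hB ⟨hc.1, hc.2.1⟩
      by_cases ho : Odd ((y : ℕ) + 1)
      · have he : ¬ Even ((y : ℕ) + 1) := Nat.not_even_iff_odd.mpr ho
        simp only [hA.1, hA.2, ho, he, c3, c4, hA, true_and, and_true, not_true,
          true_or, or_false, false_or, false_and, and_false, if_true, if_false,
          ite_true, ite_false, not_false_iff] at E1 E2 ⊢
        split_ifs <;> omega
      · have he : Even ((y : ℕ) + 1) := Nat.not_odd_iff_even.mp ho
        simp only [hA.1, hA.2, ho, he, c3, c4, hA, true_and, and_true, not_true,
          true_or, or_false, false_or, false_and, and_false, if_true, if_false,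
          ite_true, ite_false, not_false_iff] at E1 E2 ⊢
        split_ifs <;> omega
  · by_cases hB : σ.symm (σ y) < σ y ∧ σ (σ y) < σ y
    · have c1 : ¬(σ.symm y < y ∧ σ y < y ∧ Odd ((y : ℕ) + 1)) := fun hc => hA ⟨hc.1, hc.2.1⟩
      have c2 : ¬(σ.symm y < y ∧ σ y < y ∧ Even ((y : ℕ) + 1)) := fun hc => hA ⟨hc.1, hc.2.1⟩
      by_cases ho : Odd (((σ y : Fin (2*n)) : ℕ) + 1)
      · have he : ¬ Even (((σ y : Fin (2*n)) : ℕ) + 1) := Nat.not_even_iff_odd.mpr ho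
        simp only [hB.1, hB.2, ho, he, c1, c2, hB, true_and, and_true, not_true,
          true_or, or_false, false_or, or_true, false_and, and_false, if_true, if_false,
          ite_true, ite_false, not_false_iff] at E1 E2 ⊢
        split_ifs <;> omega
      · have he : Even (((σ y : Fin (2*n)) : ℕ) + 1) := Nat.not_odd_iff_even.mp ho
        simp only [hB.1, hB.2, ho, he, c1, c2, hB, true_and, and_true, not_true,
          true_or, or_false, false_or, or_true, false_and, and_false, if_true, if_false,
          ite_true, ite_false, not_false_iff] at E1 E2 ⊢
        split_ifs <;> omega
    · have c1 : ¬(σ.symm y < y ∧ σ y < y ∧ Odd ((y : ℕ) + 1)) := fun hc => hA ⟨hc.1, hc.2.1⟩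
      have c2 : ¬(σ.symm y < y ∧ σ y < y ∧ Even ((y : ℕ) + 1)) := fun hc => hA ⟨hc.1, hc.2.1⟩
      have c3 : ¬(σ.symm (σ y) < σ y ∧ σ (σ y) < σ y ∧ Odd (((σ y : Fin (2*n)) : ℕ) + 1)) :=
        fun hc => hB ⟨hc.1, hc.2.1⟩
      have c4 : ¬(σ.symm (σ y) < σ y ∧ σ (σ y) < σ y ∧ Even (((σ y : Fin (2*n)) : ℕ) + 1)) :=
        fun hc => hB ⟨hc.1, hc.2.1⟩
      simp only [c1, c2, c3, c4, hA, hB, true_and, and_true, not_true,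
        true_or, or_false, false_or, false_and, and_false, if_true, if_false,
        ite_true, ite_false, not_false_iff, or_self, not_false_eq_true] at E1 E2 ⊢
      split_ifs <;> omega

end SD

namespace SD

lemma disj_classes {m : ℕ} (σ : Equiv.Perm (Fin m)) (pr pr' : ℕ → Prop) :
    ∀ y : Fin m, ¬((σ.symm y < y ∧ σ y < y ∧ pr ((y : ℕ) + 1))
      ∧ (σ.symm (σ y) < σ y ∧ σ (σ y) < σ y ∧ pr' (((σ y : Fin m) : ℕ) + 1))) := by
  rintro y ⟨⟨-, h2, -⟩, ⟨h3, -, -⟩⟩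
  rw [Equiv.symm_apply_apply] at h3
  exact absurd h2 (not_lt.2 h3.le)

lemma N1_card (n : ℕ) (σ : Equiv.Perm (Fin (2*n))) :
    (univ.filter fun y : Fin (2*n) =>
        (σ.symm y < y ∧ σ y < y ∧ Odd ((y : ℕ) + 1))
          ∨ (σ.symm (σ y) < σ y ∧ σ (σ y) < σ y ∧ Odd (((σ y : Fin (2*n)) : ℕ) + 1))).card
      = 2 * cpko (2*n) σ := by
  rw [Finset.filter_or, Finset.card_union_of_disjoint (by
    rw [Finset.disjoint_left]
    intro y h1 h2
    simp only [mem_filter, mem_univ, true_and] at h1 h2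
    exact disj_classes σ (fun k => Odd k) (fun k => Odd k) y ⟨h1, h2⟩)]
  rw [card_filter_perm_comp σ (fun z => σ.symm z < z ∧ σ z < z ∧ Odd ((z : ℕ) + 1))]
  rw [cpko]
  ring

lemma N2_card (n : ℕ) (σ : Equiv.Perm (Fin (2*n))) :
    (univ.filter fun y : Fin (2*n) =>
        (σ.symm y < y ∧ σ y < y ∧ Even ((y : ℕ) + 1))
          ∨ (σ.symm (σ y) < σ y ∧ σ (σ y) < σ y ∧ Even (((σ y : Fin (2*n)) : ℕ) + 1))).card
      = 2 * cpke (2*n) σ := by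
  rw [Finset.filter_or, Finset.card_union_of_disjoint (by
    rw [Finset.disjoint_left]
    intro y h1 h2
    simp only [mem_filter, mem_univ, true_and] at h1 h2
    exact disj_classes σ (fun k => Even k) (fun k => Even k) y ⟨h1, h2⟩)]
  rw [card_filter_perm_comp σ (fun z => σ.symm z < z ∧ σ z < z ∧ Even ((z : ℕ) + 1))]
  rw [cpke]
  ring

lemma card_peaks {m : ℕ} (σ : Equiv.Perm (Fin m)) :
    (univ.filter fun z : Fin m => σ.symm z < z ∧ σ z < z).card = cpko m σ + cpke m σ := by
  rw [cpko, cpke, ← Finset.card_union_of_disjoint (by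
    rw [Finset.disjoint_left]
    intro z h1 h2
    simp only [mem_filter, mem_univ, true_and] at h1 h2
    exact (Nat.not_even_iff_odd.mpr h1.2.2) h2.2.2), ← Finset.filter_or]
  congr 1
  ext z
  simp only [mem_filter, mem_univ, true_and]
  constructor
  · rintro ⟨h1, h2⟩
    rcases Nat.even_or_odd ((z : ℕ) + 1) with h | h
    · exact Or.inr ⟨h1, h2, h⟩
    · exact Or.inl ⟨h1, h2, h⟩
  · rintro (⟨h1, h2, -⟩ | ⟨h1, h2, -⟩) <;> exact ⟨h1, h2⟩

lemma N3_card (n : ℕ) (σ : Equiv.Perm (Fin (2*n))) :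
    (univ.filter fun y : Fin (2*n) =>
        ¬(σ.symm y < y ∧ σ y < y) ∧ ¬(σ.symm (σ y) < σ y ∧ σ (σ y) < σ y)).card
      + 2 * cpko (2*n) σ + 2 * cpke (2*n) σ = 2*n := by
  have hsplit := Finset.card_filter_add_card_filter_not
    (s := (univ : Finset (Fin (2*n))))
    (p := fun y => (σ.symm y < y ∧ σ y < y) ∨ (σ.symm (σ y) < σ y ∧ σ (σ y) < σ y))
  have hneg : (univ.filter fun y : Fin (2*n) =>
      ¬((σ.symm y < y ∧ σ y < y) ∨ (σ.symm (σ y) < σ y ∧ σ (σ y) < σ y)))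
      = (univ.filter fun y : Fin (2*n) =>
        ¬(σ.symm y < y ∧ σ y < y) ∧ ¬(σ.symm (σ y) < σ y ∧ σ (σ y) < σ y)) := by
    ext y
    simp only [mem_filter, mem_univ, true_and, not_or]
  have hpos : (univ.filter fun y : Fin (2*n) =>
      (σ.symm y < y ∧ σ y < y) ∨ (σ.symm (σ y) < σ y ∧ σ (σ y) < σ y)).card
      = 2 * (cpko (2*n) σ + cpke (2*n) σ) := by
    rw [Finset.filter_or, Finset.card_union_of_disjoint (by
      rw [Finset.disjoint_left]
      intro y h1 h2
      simp only [mem_filter, mem_univ, true_and] at h1 h2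
      rw [Equiv.symm_apply_apply] at h2
      exact absurd h1.2 (not_lt.2 h2.1.le))]
    rw [card_filter_perm_comp σ (fun z => σ.symm z < z ∧ σ z < z), card_peaks]
    ring
  rw [hneg, hpos] at hsplit
  have : (univ : Finset (Fin (2*n))).card = 2*n := by simp
  omega

end SD

namespace SD

lemma sum_ite_const {α : Type*} [Fintype α] [DecidableEq α] (p : α → Prop)
    [DecidablePred p] (c : ℕ) :
    (∑ y : α, if p y then c else 0) = (univ.filter p).card * c := by
  rw [← Finset.sum_filter, Finset.sum_const, smul_eq_mul]

lemma count_nat (n i j : ℕ) (σ : Equiv.Perm (Fin (2*n))) :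
    (univ.filter fun x : Fin (2*n+1) =>
        cpko (2*n+1) (Φ σ x) = i ∧ cpke (2*n+1) (Φ σ x) = j).card
    = (if cpko (2*n) σ = i ∧ cpke (2*n) σ = j then 1 + 2 * cpko (2*n) σ else 0)
      + (if cpko (2*n) σ + 1 = i ∧ cpke (2*n) σ = j + 1 then 2 * cpke (2*n) σ else 0)
      + (if cpko (2*n) σ + 1 = i ∧ cpke (2*n) σ = j then
          (univ.filter fun y : Fin (2*n) =>
            ¬(σ.symm y < y ∧ σ y < y) ∧ ¬(σ.symm (σ y) < σ y ∧ σ (σ y) < σ y)).card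
          else 0) := by
  rw [Finset.card_filter, Fin.sum_univ_castSucc]
  rw [Finset.sum_congr rfl (fun y _ => pointwise n i j σ y)]
  rw [Finset.sum_add_distrib, Finset.sum_add_distrib]
  rw [sum_ite_const, sum_ite_const, sum_ite_const]
  have hlast : (if cpko (2*n+1) (Φ σ (Fin.last (2*n))) = i
        ∧ cpke (2*n+1) (Φ σ (Fin.last (2*n))) = j then 1 else 0)
      = (if cpko (2*n) σ = i ∧ cpke (2*n) σ = j then 1 else 0) := by
    rw [cpko_Φ_last, cpke_Φ_last]
  rw [hlast]
  have hN1 := N1_card n σ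
  have hN2 := N2_card n σ
  split_ifs <;> omega

end SD

namespace SD

lemma sum_ite_const_int {α : Type*} [Fintype α] [DecidableEq α] (p : α → Prop)
    [DecidablePred p] (c : ℤ) :
    (∑ y : α, if p y then c else 0) = ((univ.filter p).card : ℤ) * c := by
  rw [← Finset.sum_filter, Finset.sum_const, nsmul_eq_mul]

lemma key (n i j : ℕ) (σ : Equiv.Perm (Fin (2*n))) :
    ((univ.filter fun x : Fin (2*n+1) =>
        cpko (2*n+1) (Φ σ x) = i ∧ cpke (2*n+1) (Φ σ x) = j).card : ℤ)
    = (if cpko (2*n) σ = i ∧ cpke (2*n) σ = j then 2*(i:ℤ)+1 else 0)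
      + (if cpko (2*n) σ + 1 = i ∧ cpke (2*n) σ = j + 1 then 2*(j:ℤ)+2 else 0)
      + (if cpko (2*n) σ + 1 = i ∧ cpke (2*n) σ = j then 2*(n:ℤ)-2*(i:ℤ)-2*(j:ℤ)+2 else 0) := by
  rw [count_nat]
  have hN3 := N3_card n σ
  split_ifs <;> push_cast <;> omega

end SD


/-- The Schett–Dumont recurrence
`s_{2n+1,i,j} = (2i+1) s_{2n,i,j} + (2j+2) s_{2n,i-1,j+1} + (2n-2i-2j+2) s_{2n,i-1,j}`
for `n ≥ 0`, where terms with a negative index (i.e. with `i - 1 < 0`) are interpreted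
as `0`. -/
theorem stmt10 (n : ℕ) (i j : ℕ) :
    (s (2 * n + 1) i j : ℤ) =
      (2 * (i : ℤ) + 1) * s (2 * n) i j
        + (2 * (j : ℤ) + 2) * (if i = 0 then 0 else (s (2 * n) (i - 1) (j + 1) : ℤ))
        + (2 * (n : ℤ) - 2 * i - 2 * j + 2) *
            (if i = 0 then 0 else (s (2 * n) (i - 1) j : ℤ)) := by
  classical
  have h1 : s (2*n+1) i j
      = (univ.filter fun p : Equiv.Perm (Fin (2*n)) × Fin (2*n+1) =>
          cpko (2*n+1) (SD.Φ p.1 p.2) = i ∧ cpke (2*n+1) (SD.Φ p.1 p.2) = j).card := by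
    rw [s]
    refine (Finset.card_bij (fun p _ => SD.Φ p.1 p.2) ?_ ?_ ?_).symm
    · intro p hp
      simp only [mem_filter, mem_univ, true_and] at hp ⊢
      exact hp
    · intro p _ q _ h
      exact SD.Φ_injective h
    · intro π hπ
      obtain ⟨p, hp⟩ := SD.Φ_bijective.2 π
      refine ⟨p, ?_, hp⟩
      simp only [mem_filter, mem_univ, true_and] at hπ ⊢
      simp only at hp
      rw [hp]
      exact hπ
  have h2 : (univ.filter fun p : Equiv.Perm (Fin (2*n)) × Fin (2*n+1) =>
          cpko (2*n+1) (SD.Φ p.1 p.2) = i ∧ cpke (2*n+1) (SD.Φ p.1 p.2) = j).card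
      = ∑ σ : Equiv.Perm (Fin (2*n)),
          (univ.filter fun x : Fin (2*n+1) =>
            cpko (2*n+1) (SD.Φ σ x) = i ∧ cpke (2*n+1) (SD.Φ σ x) = j).card := by
    rw [Finset.card_filter, Fintype.sum_prod_type]
    exact Finset.sum_congr rfl fun σ _ => (Finset.card_filter _ _).symm
  rw [h1, h2, Nat.cast_sum]
  rw [Finset.sum_congr rfl (fun σ _ => SD.key n i j σ)]
  rw [Finset.sum_add_distrib, Finset.sum_add_distrib,
    SD.sum_ite_const_int, SD.sum_ite_const_int, SD.sum_ite_const_int]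
  have hA : (univ.filter fun σ : Equiv.Perm (Fin (2*n)) =>
      cpko (2*n) σ = i ∧ cpke (2*n) σ = j).card = s (2*n) i j := rfl
  by_cases hi : i = 0
  · subst hi
    have hB : (univ.filter fun σ : Equiv.Perm (Fin (2*n)) =>
        cpko (2*n) σ + 1 = 0 ∧ cpke (2*n) σ = j + 1) = ∅ := by
      apply Finset.eq_empty_of_forall_notMem
      intro σ hσ
      simp only [mem_filter, mem_univ, true_and] at hσ
      omega
    have hC : (univ.filter fun σ : Equiv.Perm (Fin (2*n)) =>
        cpko (2*n) σ + 1 = 0 ∧ cpke (2*n) σ = j) = ∅ := by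
      apply Finset.eq_empty_of_forall_notMem
      intro σ hσ
      simp only [mem_filter, mem_univ, true_and] at hσ
      omega
    rw [hA, hB, hC]
    simp only [Finset.card_empty, Nat.cast_zero, zero_mul, if_pos rfl]
    push_cast
    ring
  · have hB : (univ.filter fun σ : Equiv.Perm (Fin (2*n)) =>
        cpko (2*n) σ + 1 = i ∧ cpke (2*n) σ = j + 1).card = s (2*n) (i-1) (j+1) := by
      rw [s]
      congr 1
      ext σ
      simp only [mem_filter, mem_univ, true_and]
      omega
    have hC : (univ.filter fun σ : Equiv.Perm (Fin (2*n)) =>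
        cpko (2*n) σ + 1 = i ∧ cpke (2*n) σ = j).card = s (2*n) (i-1) j := by
      rw [s]
      congr 1
      ext σ
      simp only [mem_filter, mem_univ, true_and]
      omega
    rw [hA, hB, hC, if_neg hi, if_neg hi]
    ring
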